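/- arXiv:2310.09844 — 4 statements merged into one kernel-verified Lean document; each statement's English description precedes it below -/
import Mathlib

section
/- Solution recovery, part (b). Suppose each of the risk measures ℛ₁,...,ℛ_q is the worst-case risk measure, ℛ₀ is the expectation risk measure, and there exists (F̄,Ḡ) ∈ ℱ × 𝒢 such that for every ω ∈ Ω one has Ḡ(ξ(ω)) ∈ D_ε(δ) and (F̄(ξ(ω)), ℍ(Ḡ(ξ(ω)))) is a minimizer of the actual problem (AP)(ξ(ω)). If (F*,G*) is a minimizer of the training problem (TP), then for each ω ∈ Ω the point (F*(ξ(ω)), ℍ(G*(ξ(ω)))) is a minimizer of (AP)(ξ(ω)). -/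
open Filter Finset

/-- The multivariate Heaviside function. -/
noncomputable def Heav {s : ℕ} (v : EuclideanSpace ℝ (Fin s)) : EuclideanSpace ℝ (Fin s) :=
  WithLp.toLp 2 (fun i => if v i ≤ 0 then 0 else 1)

/-- The set `D_ε(δ) = ([−δ,−ε] ∪ [ε,δ])^m`, with `δ` possibly infinite. -/
def Dset (m : ℕ) (ε : ℝ) (δ : EReal) : Set (EuclideanSpace ℝ (Fin m)) :=
  {g | ∀ i, ε ≤ |g i| ∧ ((|g i| : ℝ) : EReal) ≤ δ}

/-- Solution recovery, part (b).  If `ℛ₁,…,ℛ_q` are worst-case risk measures,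
`ℛ₀` is the expectation, `(F̄,Ḡ) ∈ ℱ × 𝒢` tracks minimizers of `(AP)(ξω)` with
`Ḡ(ξω) ∈ D_ε(δ)`, and `(F⋆,G⋆)` is a minimizer of `(TP)`, then for every `ω` the pair
`(F⋆(ξω), ℍ(G⋆(ξω)))` is a minimizer of `(AP)(ξω)`. -/
theorem solution_recovery_b
    {r n m q : ℕ} {Ω : Type} [Fintype Ω] [Nonempty Ω]
    (P : Ω → ℝ) (hP : ∀ ω, 0 < P ω) (hPsum : ∑ ω, P ω = 1)
    (ψ : Fin (q + 1) → EuclideanSpace ℝ (Fin r) → EuclideanSpace ℝ (Fin n) →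
      EuclideanSpace ℝ (Fin m) → ℝ)
    (hψcont : ∀ k, Continuous fun p : EuclideanSpace ℝ (Fin r) × EuclideanSpace ℝ (Fin n) ×
      EuclideanSpace ℝ (Fin m) => ψ k p.1 p.2.1 p.2.2)
    (C : Set (EuclideanSpace ℝ (Fin n) × EuclideanSpace ℝ (Fin m)))
    (hCne : C.Nonempty) (hCcl : IsClosed C)
    (hCbin : ∀ p ∈ C, ∀ i, p.2 i = 0 ∨ p.2 i = 1)
    (ℱ : Set (EuclideanSpace ℝ (Fin r) → EuclideanSpace ℝ (Fin n)))
    (𝒢 : Set (EuclideanSpace ℝ (Fin r) → EuclideanSpace ℝ (Fin m)))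
    (hℱcont : ∀ F ∈ ℱ, Continuous F) (h𝒢cont : ∀ G ∈ 𝒢, Continuous G)
    (ξ : Ω → EuclideanSpace ℝ (Fin r))
    (R : Fin (q + 1) → (Ω → ℝ) → ℝ)
    (hRconst : ∀ k (c : ℝ), R k (fun _ => c) = c)
    (hR0exp : R 0 = fun η => ∑ ω, P ω * η ω)
    (hRworst : ∀ k : Fin q, R k.succ = fun η => ⨆ ω, η ω)
    (ε : ℝ) (hε : 0 < ε) (δ : EReal) (hδ : (ε : EReal) < δ)
    (Fb : EuclideanSpace ℝ (Fin r) → EuclideanSpace ℝ (Fin n))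
    (Gb : EuclideanSpace ℝ (Fin r) → EuclideanSpace ℝ (Fin m))
    (hFb : Fb ∈ ℱ) (hGb : Gb ∈ 𝒢)
    (hD : ∀ ω, Gb (ξ ω) ∈ Dset m ε δ)
    (hAPmin : ∀ ω,
      ((Fb (ξ ω), Heav (Gb (ξ ω))) ∈ C ∧
        (∀ k : Fin q, ψ k.succ (ξ ω) (Fb (ξ ω)) (Heav (Gb (ξ ω))) ≤ 0)) ∧
      (∀ x y, (x, y) ∈ C → (∀ k : Fin q, ψ k.succ (ξ ω) x y ≤ 0) →
        ψ 0 (ξ ω) (Fb (ξ ω)) (Heav (Gb (ξ ω))) ≤ ψ 0 (ξ ω) x y))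
    (Fstar : EuclideanSpace ℝ (Fin r) → EuclideanSpace ℝ (Fin n))
    (Gstar : EuclideanSpace ℝ (Fin r) → EuclideanSpace ℝ (Fin m))
    (hstarFmem : Fstar ∈ ℱ) (hstarGmem : Gstar ∈ 𝒢)
    (hstarRisk : ∀ k : Fin q,
      R k.succ (fun ω => ψ k.succ (ξ ω) (Fstar (ξ ω)) (Heav (Gstar (ξ ω)))) ≤ 0)
    (hstarC : ∀ ω, (Fstar (ξ ω), Heav (Gstar (ξ ω))) ∈ C)
    (hstarD : ∀ ω, Gstar (ξ ω) ∈ Dset m ε δ)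
    (hstarOpt : ∀ F ∈ ℱ, ∀ G ∈ 𝒢,
      (∀ k : Fin q,
        R k.succ (fun ω => ψ k.succ (ξ ω) (F (ξ ω)) (Heav (G (ξ ω)))) ≤ 0) →
      (∀ ω, (F (ξ ω), Heav (G (ξ ω))) ∈ C) →
      (∀ ω, G (ξ ω) ∈ Dset m ε δ) →
      R 0 (fun ω => ψ 0 (ξ ω) (Fstar (ξ ω)) (Heav (Gstar (ξ ω)))) ≤
        R 0 (fun ω => ψ 0 (ξ ω) (F (ξ ω)) (Heav (G (ξ ω))))) :
    ∀ ω,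
      ((Fstar (ξ ω), Heav (Gstar (ξ ω))) ∈ C ∧
        (∀ k : Fin q, ψ k.succ (ξ ω) (Fstar (ξ ω)) (Heav (Gstar (ξ ω))) ≤ 0)) ∧
      (∀ x y, (x, y) ∈ C → (∀ k : Fin q, ψ k.succ (ξ ω) x y ≤ 0) →
        ψ 0 (ξ ω) (Fstar (ξ ω)) (Heav (Gstar (ξ ω))) ≤ ψ 0 (ξ ω) x y) := by
  -- pointwise constraint satisfaction for (F⋆,G⋆)
  have hstarFeas : ∀ ω, ∀ k : Fin q,
      ψ k.succ (ξ ω) (Fstar (ξ ω)) (Heav (Gstar (ξ ω))) ≤ 0 := by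
    intro ω k
    have h := hstarRisk k
    rw [hRworst k] at h
    beta_reduce at h
    exact le_trans (le_ciSup (f := fun ω => ψ k.succ (ξ ω) (Fstar (ξ ω)) (Heav (Gstar (ξ ω)))) (Set.Finite.bddAbove (Set.finite_range _)) ω) h
  -- (Fb, Gb) is feasible for (TP)
  have hbRisk : ∀ k : Fin q,
      R k.succ (fun ω => ψ k.succ (ξ ω) (Fb (ξ ω)) (Heav (Gb (ξ ω)))) ≤ 0 := by
    intro k
    rw [hRworst k]
    beta_reduce
    exact ciSup_le fun ω => (hAPmin ω).1.2 k
  -- pointwise: value at bar ≤ value at star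
  have hple : ∀ ω, ψ 0 (ξ ω) (Fb (ξ ω)) (Heav (Gb (ξ ω))) ≤
      ψ 0 (ξ ω) (Fstar (ξ ω)) (Heav (Gstar (ξ ω))) := fun ω =>
    (hAPmin ω).2 _ _ (hstarC ω) (hstarFeas ω)
  -- expectation: star ≤ bar
  have hexp : ∑ ω, P ω * ψ 0 (ξ ω) (Fstar (ξ ω)) (Heav (Gstar (ξ ω))) ≤
      ∑ ω, P ω * ψ 0 (ξ ω) (Fb (ξ ω)) (Heav (Gb (ξ ω))) := by
    have := hstarOpt Fb hFb Gb hGb hbRisk (fun ω => (hAPmin ω).1.1) hD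
    rwa [hR0exp] at this
  -- hence pointwise equality
  have heq : ∀ ω, ψ 0 (ξ ω) (Fstar (ξ ω)) (Heav (Gstar (ξ ω))) =
      ψ 0 (ξ ω) (Fb (ξ ω)) (Heav (Gb (ξ ω))) := by
    by_contra hcon
    push_neg at hcon
    obtain ⟨ω₀, hω₀⟩ := hcon
    have hlt : ψ 0 (ξ ω₀) (Fb (ξ ω₀)) (Heav (Gb (ξ ω₀))) <
        ψ 0 (ξ ω₀) (Fstar (ξ ω₀)) (Heav (Gstar (ξ ω₀))) :=
      lt_of_le_of_ne (hple ω₀) (fun h => hω₀ h.symm)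
    have : ∑ ω, P ω * ψ 0 (ξ ω) (Fb (ξ ω)) (Heav (Gb (ξ ω))) <
        ∑ ω, P ω * ψ 0 (ξ ω) (Fstar (ξ ω)) (Heav (Gstar (ξ ω))) := by
      apply Finset.sum_lt_sum
      · intro ω _
        exact mul_le_mul_of_nonneg_left (hple ω) (hP ω).le
      · exact ⟨ω₀, Finset.mem_univ ω₀,
          mul_lt_mul_of_pos_left hlt (hP ω₀)⟩
    exact absurd hexp (not_le.mpr this)
  intro ω
  refine ⟨⟨hstarC ω, hstarFeas ω⟩, fun x y hxy hfeas => ?_⟩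
  rw [heq ω]
  exact (hAPmin ω).2 x y hxy hfeas
end

section
/- Limiting bound. Suppose δ^ν ∈ (ε,∞] → δ ∈ (ε,∞] and ξ^ν → ξ̄ pointwise, where ξ̄ is the constant random vector with value ξ̄ ∈ Ξ, and assume: (a) the risk measures ℛ₀,ℛ₁,...,ℛ_q are real-valued and continuous; (b) for every k = 0,1,...,q, ξ ∈ Ξ and (x,y) ∈ C, one has ψ_k^ν(ζ^ν,x^ν,y) → ψ_k(ξ,x,y) whenever ζ^ν ∈ Ξ → ξ and (x^ν,y) ∈ C → (x,y); (c) there exists h : ℱ × 𝒢 → [0,∞) with liminf h^ν(F^ν,G^ν) ≥ h(F,G) whenever (F^ν,G^ν) → (F,G) uniformly; (d) for each ν, (F̂^ν,Ĝ^ν) is feasible for (TP)^ν and ℛ₀(ω ↦ ψ₀^ν(ξ^ν(ω), F̂^ν(ξ^ν(ω)), ℍ(Ĝ^ν(ξ^ν(ω))))) + h^ν(F̂^ν,Ĝ^ν) ≤ γ^ν. If there is a subsequence N ⊂ ℕ such that (F̂^ν,Ĝ^ν) → (F*,G*) uniformly along N and liminf_{ν∈N} γ^ν < ∞, then: (F*(ξ̄),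 ℍ(G*(ξ̄))) is feasible for (AP)(ξ̄); ℍ(Ĝ^ν(ξ^ν(ω))) = ℍ(G*(ξ̄)) for all ω ∈ Ω when ν ∈ N is sufficiently large; G*(ξ̄) ∈ D_ε(δ); and ψ₀(ξ̄, F*(ξ̄), ℍ(G*(ξ̄))) + h(F*,G*) ≤ liminf_{ν∈N} γ^ν. -/
open Filter Finset

/-- Limiting bound.  Any feasible decision rules of `(TP)^ν` whose objective
values are bounded by `γ^ν`, converging uniformly on `Ξ` along a subsequence with
`liminf γ^ν < ∞`, have a limit `(F⋆,G⋆)` that is feasible for `(AP)(ξ̄)`, whose binary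
prescriptions eventually coincide with `ℍ(G⋆(ξ̄))`, with `G⋆(ξ̄) ∈ D_ε(δ)` and
`ψ₀(ξ̄,F⋆(ξ̄),ℍ(G⋆(ξ̄))) + h(F⋆,G⋆) ≤ liminf γ^ν`. -/
theorem limiting_bound
    {r n m q : ℕ} {Ω : Type} [Fintype Ω] [Nonempty Ω]
    (P : Ω → ℝ) (hP : ∀ ω, 0 < P ω) (hPsum : ∑ ω, P ω = 1)
    (ψ : Fin (q + 1) → EuclideanSpace ℝ (Fin r) → EuclideanSpace ℝ (Fin n) →
      EuclideanSpace ℝ (Fin m) → ℝ)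
    (hψcont : ∀ k, Continuous fun p : EuclideanSpace ℝ (Fin r) × EuclideanSpace ℝ (Fin n) ×
      EuclideanSpace ℝ (Fin m) => ψ k p.1 p.2.1 p.2.2)
    (ψs : ℕ → Fin (q + 1) → EuclideanSpace ℝ (Fin r) → EuclideanSpace ℝ (Fin n) →
      EuclideanSpace ℝ (Fin m) → ℝ)
    (hψscont : ∀ ν k, Continuous fun p : EuclideanSpace ℝ (Fin r) × EuclideanSpace ℝ (Fin n) ×
      EuclideanSpace ℝ (Fin m) => ψs ν k p.1 p.2.1 p.2.2)
    (C : Set (EuclideanSpace ℝ (Fin n) × EuclideanSpace ℝ (Fin m)))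
    (hCne : C.Nonempty) (hCcl : IsClosed C)
    (hCbin : ∀ p ∈ C, ∀ i, p.2 i = 0 ∨ p.2 i = 1)
    (Ξ : Set (EuclideanSpace ℝ (Fin r))) (hΞcomp : IsCompact Ξ)
    (ξbar : EuclideanSpace ℝ (Fin r)) (hξbar : ξbar ∈ Ξ)
    (ξs : ℕ → Ω → EuclideanSpace ℝ (Fin r)) (hξsΞ : ∀ ν ω, ξs ν ω ∈ Ξ)
    (hξsconv : ∀ ω, Tendsto (fun ν => ξs ν ω) atTop (nhds ξbar))
    (ℱ : Set (EuclideanSpace ℝ (Fin r) → EuclideanSpace ℝ (Fin n)))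
    (𝒢 : Set (EuclideanSpace ℝ (Fin r) → EuclideanSpace ℝ (Fin m)))
    (hℱcont : ∀ F ∈ ℱ, ContinuousOn F Ξ) (h𝒢cont : ∀ G ∈ 𝒢, ContinuousOn G Ξ)
    -- (a) risk measures: real-valued and continuous
    (R : Fin (q + 1) → (Ω → ℝ) → ℝ)
    (hRconst : ∀ k (c : ℝ), R k (fun _ => c) = c)
    (hRcont : ∀ k (η : Ω → ℝ) (ηs : ℕ → Ω → ℝ),
      (∀ ω, Tendsto (fun ν => ηs ν ω) atTop (nhds (η ω))) →
      Tendsto (fun ν => R k (ηs ν)) atTop (nhds (R k η)))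
    (ε : ℝ) (hε : 0 < ε)
    (δ : EReal) (hδ : (ε : EReal) < δ)
    (δs : ℕ → EReal) (hδs : ∀ ν, (ε : EReal) < δs ν)
    (hδsconv : Tendsto δs atTop (nhds δ))
    -- (b) approximating functions converge
    (hψapprox : ∀ (k : Fin (q + 1)) (ξ : EuclideanSpace ℝ (Fin r)), ξ ∈ Ξ →
      ∀ x y, (x, y) ∈ C →
      ∀ (ζ : ℕ → EuclideanSpace ℝ (Fin r)) (xs : ℕ → EuclideanSpace ℝ (Fin n)),
        (∀ ν, ζ ν ∈ Ξ) → (∀ ν, (xs ν, y) ∈ C) →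
        Tendsto ζ atTop (nhds ξ) → Tendsto xs atTop (nhds x) →
        Tendsto (fun ν => ψs ν k (ζ ν) (xs ν) y) atTop (nhds (ψ k ξ x y)))
    -- (c) regularizers and their liminf-limit
    (hs : ℕ → (EuclideanSpace ℝ (Fin r) → EuclideanSpace ℝ (Fin n)) →
      (EuclideanSpace ℝ (Fin r) → EuclideanSpace ℝ (Fin m)) → ℝ)
    (hhs_nonneg : ∀ ν F G, 0 ≤ hs ν F G)
    (h : (EuclideanSpace ℝ (Fin r) → EuclideanSpace ℝ (Fin n)) →
      (EuclideanSpace ℝ (Fin r) → EuclideanSpace ℝ (Fin m)) → ℝ)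
    (hh_nonneg : ∀ F G, 0 ≤ h F G)
    (hh_liminf : ∀ (Fseq : ℕ → EuclideanSpace ℝ (Fin r) → EuclideanSpace ℝ (Fin n))
      (Gseq : ℕ → EuclideanSpace ℝ (Fin r) → EuclideanSpace ℝ (Fin m))
      (F : EuclideanSpace ℝ (Fin r) → EuclideanSpace ℝ (Fin n))
      (G : EuclideanSpace ℝ (Fin r) → EuclideanSpace ℝ (Fin m)),
      TendstoUniformlyOn Fseq F atTop Ξ → TendstoUniformlyOn Gseq G atTop Ξ →
      ((h F G : ℝ) : EReal) ≤ atTop.liminf fun ν => ((hs ν (Fseq ν) (Gseq ν) : ℝ) : EReal))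
    -- (d) (F̂^ν, Ĝ^ν) feasible for (TP)^ν with objective value at most γ^ν
    (Fhat : ℕ → EuclideanSpace ℝ (Fin r) → EuclideanSpace ℝ (Fin n))
    (Ghat : ℕ → EuclideanSpace ℝ (Fin r) → EuclideanSpace ℝ (Fin m))
    (hhatfeas : ∀ ν, Fhat ν ∈ ℱ ∧ Ghat ν ∈ 𝒢 ∧
      (∀ k : Fin q, R k.succ (fun ω => ψs ν k.succ (ξs ν ω) (Fhat ν (ξs ν ω))
        (Heav (Ghat ν (ξs ν ω)))) ≤ 0) ∧
      (∀ ω, (Fhat ν (ξs ν ω), Heav (Ghat ν (ξs ν ω))) ∈ C) ∧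
      (∀ ω, Ghat ν (ξs ν ω) ∈ Dset m ε (δs ν)))
    (γ : ℕ → ℝ)
    (hγ : ∀ ν, R 0 (fun ω => ψs ν 0 (ξs ν ω) (Fhat ν (ξs ν ω))
      (Heav (Ghat ν (ξs ν ω)))) + hs ν (Fhat ν) (Ghat ν) ≤ γ ν)
    -- the subsequence and its uniform limit
    (N : ℕ → ℕ) (hN : StrictMono N)
    (Fstar : EuclideanSpace ℝ (Fin r) → EuclideanSpace ℝ (Fin n))
    (Gstar : EuclideanSpace ℝ (Fin r) → EuclideanSpace ℝ (Fin m))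
    (hFstar : Fstar ∈ ℱ) (hGstar : Gstar ∈ 𝒢)
    (hFconv : TendstoUniformlyOn (fun j => Fhat (N j)) Fstar atTop Ξ)
    (hGconv : TendstoUniformlyOn (fun j => Ghat (N j)) Gstar atTop Ξ)
    (hγliminf : (atTop.liminf fun j => ((γ (N j) : ℝ) : EReal)) < ⊤) :
    ((Fstar ξbar, Heav (Gstar ξbar)) ∈ C ∧
      (∀ k : Fin q, ψ k.succ ξbar (Fstar ξbar) (Heav (Gstar ξbar)) ≤ 0)) ∧
    (∃ J, ∀ j ≥ J, ∀ ω, Heav (Ghat (N j) (ξs (N j) ω)) = Heav (Gstar ξbar)) ∧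
    Gstar ξbar ∈ Dset m ε δ ∧
    ((ψ 0 ξbar (Fstar ξbar) (Heav (Gstar ξbar)) + h Fstar Gstar : ℝ) : EReal) ≤
      atTop.liminf fun j => ((γ (N j) : ℝ) : EReal) := by
  classical
  set y := Heav (Gstar ξbar) with hy
  have tendN : Tendsto N atTop atTop := hN.tendsto_atTop
  have tξ' : ∀ ω, Tendsto (fun j => ξs (N j) ω) atTop (nhdsWithin ξbar Ξ) := fun ω =>
    tendsto_nhdsWithin_iff.mpr ⟨(hξsconv ω).comp tendN,
      Eventually.of_forall fun j => hξsΞ _ ω⟩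
  have tF : ∀ ω, Tendsto (fun j => Fhat (N j) (ξs (N j) ω)) atTop (nhds (Fstar ξbar)) :=
    fun ω => hFconv.tendsto_comp (hℱcont Fstar hFstar ξbar hξbar) (tξ' ω)
  have tG : ∀ ω, Tendsto (fun j => Ghat (N j) (ξs (N j) ω)) atTop (nhds (Gstar ξbar)) :=
    fun ω => hGconv.tendsto_comp (h𝒢cont Gstar hGstar ξbar hξbar) (tξ' ω)
  obtain ⟨ω0⟩ := (inferInstance : Nonempty Ω)
  have contApp : ∀ (i : Fin m), Continuous fun v : EuclideanSpace ℝ (Fin m) => v i :=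
    fun i => (continuous_apply i).comp (PiLp.continuous_ofLp 2 _)
  have tGi : ∀ ω (i : Fin m), Tendsto (fun j => Ghat (N j) (ξs (N j) ω) i) atTop
      (nhds (Gstar ξbar i)) := fun ω i => ((contApp i).tendsto _).comp (tG ω)
  have hGbar : ∀ i, ε ≤ |Gstar ξbar i| := fun i =>
    ge_of_tendsto ((continuous_abs.tendsto _).comp (tGi ω0 i))
      (Eventually.of_forall fun j => ((hhatfeas (N j)).2.2.2.2 ω0 i).1)
  -- eventual equality of the Heaviside prescriptions
  have hHeav : ∀ᶠ j in atTop, ∀ ω, Heav (Ghat (N j) (ξs (N j) ω)) = y := by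
    rw [Filter.eventually_all]
    intro ω
    have hcomp : ∀ᶠ j in atTop, ∀ i : Fin m,
        |Ghat (N j) (ξs (N j) ω) i - Gstar ξbar i| < ε := by
      rw [Filter.eventually_all]
      intro i
      obtain ⟨M, hM⟩ := Metric.tendsto_atTop.mp (tGi ω i) ε hε
      exact eventually_atTop.mpr ⟨M, fun j hj => by
        simpa [Real.dist_eq] using hM j hj⟩
    filter_upwards [hcomp] with j hj
    ext i
    have h2 := abs_lt.mp (hj i)
    show (if Ghat (N j) (ξs (N j) ω) i ≤ 0 then (0:ℝ) else 1)
      = if Gstar ξbar i ≤ 0 then (0:ℝ) else 1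
    rcases le_or_gt (Gstar ξbar i) 0 with hle | hlt
    · have hεle : ε ≤ -(Gstar ξbar i) := by
        have := hGbar i; rw [abs_of_nonpos hle] at this; exact this
      rw [if_pos hle, if_pos (by linarith [h2.2])]
    · have hεle : ε ≤ Gstar ξbar i := by
        have := hGbar i; rw [abs_of_pos hlt] at this; exact this
      rw [if_neg (not_le.mpr hlt), if_neg (by push_neg; linarith [h2.1])]
  obtain ⟨J, hJ⟩ := eventually_atTop.mp hHeav
  -- membership in C of the limit
  have hC0 : (Fstar ξbar, y) ∈ C := by
    refine hCcl.mem_of_tendsto ((tF ω0).prodMk_nhds tendsto_const_nhds) ?_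
    filter_upwards [hHeav] with j hj
    rw [← hj ω0]
    exact (hhatfeas (N j)).2.2.2.1 ω0
  -- convergence of the risk values
  have claim : ∀ k : Fin (q + 1), Tendsto (fun j => R k (fun ω => ψs (N j) k (ξs (N j) ω)
      (Fhat (N j) (ξs (N j) ω)) (Heav (Ghat (N j) (ξs (N j) ω))))) atTop
      (nhds (ψ k ξbar (Fstar ξbar) y)) := by
    intro k
    have hpt : ∀ ω, Tendsto (fun j => ψs (N j) k (ξs (N j) ω)
        (Fhat (N j) (ξs (N j) ω)) (Heav (Ghat (N j) (ξs (N j) ω)))) atTop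
        (nhds (ψ k ξbar (Fstar ξbar) y)) := by
      intro ω
      set ζ' : ℕ → EuclideanSpace ℝ (Fin r) :=
        fun ν => if ∃ j, J ≤ j ∧ N j = ν then ξs ν ω else ξbar with hζ'
      set xs' : ℕ → EuclideanSpace ℝ (Fin n) :=
        fun ν => if ∃ j, J ≤ j ∧ N j = ν then Fhat ν (ξs ν ω) else Fstar ξbar with hxs'
      have hζΞ : ∀ ν, ζ' ν ∈ Ξ := by
        intro ν; simp only [hζ']; split_ifs; exacts [hξsΞ ν ω, hξbar]
      have hxsC : ∀ ν, (xs' ν, y) ∈ C := by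
        intro ν; simp only [hxs']; split_ifs with hc
        · obtain ⟨j, hjJ, rfl⟩ := hc
          have := (hhatfeas (N j)).2.2.2.1 ω
          rwa [hJ j hjJ ω] at this
        · exact hC0
      have hζconv : Tendsto ζ' atTop (nhds ξbar) := by
        rw [Metric.tendsto_atTop]
        intro e he
        obtain ⟨M, hM⟩ := Metric.tendsto_atTop.mp (hξsconv ω) e he
        refine ⟨M, fun ν hν => ?_⟩
        simp only [hζ']; split_ifs
        exacts [hM ν hν, by simpa using he]
      have hxsconv : Tendsto xs' atTop (nhds (Fstar ξbar)) := by
        rw [Metric.tendsto_atTop]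
        intro e he
        obtain ⟨M, hM⟩ := Metric.tendsto_atTop.mp (tF ω) e he
        refine ⟨N M, fun ν hν => ?_⟩
        simp only [hxs']; split_ifs with hc
        · obtain ⟨j, hjJ, rfl⟩ := hc
          exact hM j (hN.le_iff_le.mp hν)
        · simpa using he
      have happ := hψapprox k ξbar hξbar (Fstar ξbar) y hC0 ζ' xs' hζΞ hxsC hζconv hxsconv
      have hcomp : Tendsto (fun j => ψs (N j) k (ζ' (N j)) (xs' (N j)) y) atTop
          (nhds (ψ k ξbar (Fstar ξbar) y)) := happ.comp tendN
      refine Tendsto.congr' ?_ hcomp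
      filter_upwards [eventually_ge_atTop J] with j hj
      have h1 : ζ' (N j) = ξs (N j) ω := if_pos ⟨j, hj, rfl⟩
      have h2 : xs' (N j) = Fhat (N j) (ξs (N j) ω) := if_pos ⟨j, hj, rfl⟩
      rw [h1, h2, hJ j hj ω]
    have := hRcont k (fun _ => ψ k ξbar (Fstar ξbar) y)
      (fun j ω => ψs (N j) k (ξs (N j) ω) (Fhat (N j) (ξs (N j) ω))
        (Heav (Ghat (N j) (ξs (N j) ω)))) hpt
    rwa [hRconst] at this
  -- feasibility of the inequality constraints
  have hcons : ∀ k : Fin q, ψ k.succ ξbar (Fstar ξbar) y ≤ 0 := fun k =>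
    le_of_tendsto (claim k.succ)
      (Eventually.of_forall fun j => (hhatfeas (N j)).2.2.1 k)
  -- Dset membership
  have hDset : Gstar ξbar ∈ Dset m ε δ := by
    intro i
    refine ⟨hGbar i, ?_⟩
    have t1 : Tendsto (fun j => ((|Ghat (N j) (ξs (N j) ω0) i| : ℝ) : EReal)) atTop
        (nhds ((|Gstar ξbar i| : ℝ) : EReal)) :=
      (continuous_coe_real_ereal.tendsto _).comp
        ((continuous_abs.tendsto _).comp (tGi ω0 i))
    have t2 : Tendsto (fun j => δs (N j)) atTop (nhds δ) := hδsconv.comp tendN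
    exact le_of_tendsto_of_tendsto t1 t2
      (Eventually.of_forall fun j => ((hhatfeas (N j)).2.2.2.2 ω0 i).2)
  -- regularizer liminf bound
  set Fseq : ℕ → EuclideanSpace ℝ (Fin r) → EuclideanSpace ℝ (Fin n) :=
    fun ν => if ∃ j, N j = ν then Fhat ν else Fstar with hFseq
  set Gseq : ℕ → EuclideanSpace ℝ (Fin r) → EuclideanSpace ℝ (Fin m) :=
    fun ν => if ∃ j, N j = ν then Ghat ν else Gstar with hGseq
  have hFsequ : TendstoUniformlyOn Fseq Fstar atTop Ξ := by
    rw [Metric.tendstoUniformlyOn_iff]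
    intro e he
    obtain ⟨M, hM⟩ := eventually_atTop.mp (Metric.tendstoUniformlyOn_iff.mp hFconv e he)
    rw [eventually_atTop]
    refine ⟨N M, fun ν hν x hx => ?_⟩
    simp only [hFseq]; split_ifs with hc
    · obtain ⟨j, rfl⟩ := hc
      exact hM j (hN.le_iff_le.mp hν) x hx
    · simpa using he
  have hGsequ : TendstoUniformlyOn Gseq Gstar atTop Ξ := by
    rw [Metric.tendstoUniformlyOn_iff]
    intro e he
    obtain ⟨M, hM⟩ := eventually_atTop.mp (Metric.tendstoUniformlyOn_iff.mp hGconv e he)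
    rw [eventually_atTop]
    refine ⟨N M, fun ν hν x hx => ?_⟩
    simp only [hGseq]; split_ifs with hc
    · obtain ⟨j, rfl⟩ := hc
      exact hM j (hN.le_iff_le.mp hν) x hx
    · simpa using he
  have hh1 := hh_liminf Fseq Gseq Fstar Gstar hFsequ hGsequ
  have hsub : (atTop.liminf fun ν => ((hs ν (Fseq ν) (Gseq ν) : ℝ) : EReal)) ≤
      atTop.liminf fun j => ((hs (N j) (Fhat (N j)) (Ghat (N j)) : ℝ) : EReal) := by
    have h1 : liminf (fun ν => ((hs ν (Fseq ν) (Gseq ν) : ℝ) : EReal)) atTop ≤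
        liminf (fun ν => ((hs ν (Fseq ν) (Gseq ν) : ℝ) : EReal)) (Filter.map N atTop) :=
      liminf_le_liminf_of_le tendN
    rw [← Filter.liminf_comp] at h1
    refine h1.trans (le_of_eq (Filter.liminf_congr (Eventually.of_forall fun j => ?_)))
    have e1 : Fseq (N j) = Fhat (N j) := if_pos ⟨j, rfl⟩
    have e2 : Gseq (N j) = Ghat (N j) := if_pos ⟨j, rfl⟩
    simp only [Function.comp, e1, e2]
  have hh2 : ((h Fstar Gstar : ℝ) : EReal) ≤
      atTop.liminf fun j => ((hs (N j) (Fhat (N j)) (Ghat (N j)) : ℝ) : EReal) :=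
    hh1.trans hsub
  refine ⟨⟨hC0, hcons⟩, ⟨J, hJ⟩, hDset, ?_⟩
  -- the final liminf bound
  by_contra hcon
  push_neg at hcon
  obtain ⟨b, hb1, hb2⟩ := EReal.exists_between_coe_real hcon
  have hb2' : b < ψ 0 ξbar (Fstar ξbar) y + h Fstar Gstar := EReal.coe_lt_coe_iff.mp hb2
  set s := (ψ 0 ξbar (Fstar ξbar) y + h Fstar Gstar - b) / 2 with hsdef
  have hs0 : 0 < s := by simp only [hsdef]; linarith
  have e1 : ∀ᶠ j in atTop, ψ 0 ξbar (Fstar ξbar) y - s <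
      R 0 (fun ω => ψs (N j) 0 (ξs (N j) ω) (Fhat (N j) (ξs (N j) ω))
        (Heav (Ghat (N j) (ξs (N j) ω)))) :=
    Tendsto.eventually_const_lt (by linarith) (claim 0)
  have e2 : ∀ᶠ j in atTop, ((h Fstar Gstar - s : ℝ) : EReal) <
      ((hs (N j) (Fhat (N j)) (Ghat (N j)) : ℝ) : EReal) :=
    eventually_lt_of_lt_liminf
      (lt_of_lt_of_le (EReal.coe_lt_coe_iff.mpr (by linarith)) hh2)
  have e3 : ∀ᶠ j in atTop, (b : EReal) ≤ ((γ (N j) : ℝ) : EReal) := by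
    filter_upwards [e1, e2] with j h1 h2
    have h2' : h Fstar Gstar - s < hs (N j) (Fhat (N j)) (Ghat (N j)) :=
      EReal.coe_lt_coe_iff.mp h2
    have hg := hγ (N j)
    have : b ≤ γ (N j) := by simp only [hsdef] at h1 h2' ⊢; linarith
    exact_mod_cast this
  exact absurd (le_liminf_of_le (by isBoundedDefault) e3) (not_le.mpr hb1)
end

section
/- Decision rule guarantee for the minimum decision rule (MDR). Fix ν ∈ ℕ, suppose δ, δ^ν ∈ (ε,∞], τ^ν ∈ [0,∞), (F^ν,G^ν) is a τ^ν-minimizer of the training problem (TP)^ν without the risk constraints, and the following hold: (a) ℛ₀ is real-valued, monotone, and convex; (b) h^ν(F,G) = 0 whenever F and G are constant mappings; (c) there exist σ^ν, κ₀ ∈ [0,∞) with |ψ₀(ξ,x,y) − ψ₀(ξ',x,y)| ≤ κ₀‖ξ − ξ'‖₂ and |ψ₀^ν(ξ,x,y) − ψ₀(ξ,x,y)| ≤ σ^ν for all ξ,ξ' ∈ Ξ and (x,y) ∈ C; (d) ℱ and 𝒢 are closed under addition of constants and contain their zero mappings. Let ω^ν ∈ argmin_{ω∈Ω} ψ₀^ν(ξ^ν(ω),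 F^ν(ξ^ν(ω)), ℍ(G^ν(ξ^ν(ω)))) and set (x^ν,y^ν) = (F^ν(ξ^ν(ω^ν)), ℍ(G^ν(ξ^ν(ω^ν)))). Then for every ξ ∈ Ξ: (x^ν,y^ν) ∈ C, the infimum inf_{(x,y)∈C} ψ₀(ξ,x,y) is finite, and ψ₀(ξ, x^ν, y^ν) ≤ inf_{(x,y)∈C} ψ₀(ξ,x,y) + 2σ^ν + τ^ν + 2κ₀·diam Ξ. -/
open Filter Finset

/-- Decision rule guarantee for the minimum decision rule (MDR): the constant
decision prescribed at the best training point is `(2σ^ν + τ^ν + 2κ₀·diam Ξ)`-suboptimal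
for the actual problem uniformly over `ξ ∈ Ξ`. -/
theorem MDR_guarantee
    {r n m : ℕ} {Ω : Type} [Fintype Ω] [Nonempty Ω]
    (P : Ω → ℝ) (hP : ∀ ω, 0 < P ω) (hPsum : ∑ ω, P ω = 1)
    (ψ0 ψ0ν : EuclideanSpace ℝ (Fin r) → EuclideanSpace ℝ (Fin n) →
      EuclideanSpace ℝ (Fin m) → ℝ)
    (hψ0cont : Continuous fun p : EuclideanSpace ℝ (Fin r) × EuclideanSpace ℝ (Fin n) ×
      EuclideanSpace ℝ (Fin m) => ψ0 p.1 p.2.1 p.2.2)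
    (hψ0νcont : Continuous fun p : EuclideanSpace ℝ (Fin r) × EuclideanSpace ℝ (Fin n) ×
      EuclideanSpace ℝ (Fin m) => ψ0ν p.1 p.2.1 p.2.2)
    (C : Set (EuclideanSpace ℝ (Fin n) × EuclideanSpace ℝ (Fin m)))
    (hCne : C.Nonempty) (hCcl : IsClosed C)
    (hCbin : ∀ p ∈ C, ∀ i, p.2 i = 0 ∨ p.2 i = 1)
    (Ξ : Set (EuclideanSpace ℝ (Fin r))) (hΞcomp : IsCompact Ξ)
    (ξν : Ω → EuclideanSpace ℝ (Fin r)) (hξν : ∀ ω, ξν ω ∈ Ξ)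
    (ℱ : Set (EuclideanSpace ℝ (Fin r) → EuclideanSpace ℝ (Fin n)))
    (𝒢 : Set (EuclideanSpace ℝ (Fin r) → EuclideanSpace ℝ (Fin m)))
    (hℱcont : ∀ F ∈ ℱ, ContinuousOn F Ξ) (h𝒢cont : ∀ G ∈ 𝒢, ContinuousOn G Ξ)
    -- (a) ℛ₀ real-valued, monotone, convex
    (R0 : (Ω → ℝ) → ℝ)
    (hR0const : ∀ c : ℝ, R0 (fun _ => c) = c)
    (hR0mono : ∀ η η' : Ω → ℝ, (∀ ω, η ω ≤ η' ω) → R0 η ≤ R0 η')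
    (hR0convex : ∀ l : ℝ, 0 ≤ l → l ≤ 1 → ∀ η η' : Ω → ℝ,
      R0 (fun ω => (1 - l) * η ω + l * η' ω) ≤ (1 - l) * R0 η + l * R0 η')
    -- (b) regularizer vanishes on constant mappings
    (hν : (EuclideanSpace ℝ (Fin r) → EuclideanSpace ℝ (Fin n)) →
      (EuclideanSpace ℝ (Fin r) → EuclideanSpace ℝ (Fin m)) → ℝ)
    (hhν_nonneg : ∀ F G, 0 ≤ hν F G)
    (hhν_const : ∀ F G, (∀ ζ ∈ Ξ, ∀ ζ' ∈ Ξ, F ζ = F ζ') →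
      (∀ ζ ∈ Ξ, ∀ ζ' ∈ Ξ, G ζ = G ζ') → hν F G = 0)
    (ε : ℝ) (hε : 0 < ε)
    (δ δν : EReal) (hδ : (ε : EReal) < δ) (hδν : (ε : EReal) < δν)
    -- (c) Lipschitz and approximation bounds
    (σν κ0 : ℝ) (hσν : 0 ≤ σν) (hκ0 : 0 ≤ κ0)
    (hLip : ∀ x y, (x, y) ∈ C → ∀ ξ ∈ Ξ, ∀ ξ' ∈ Ξ,
      |ψ0 ξ x y - ψ0 ξ' x y| ≤ κ0 * dist ξ ξ')
    (happrox : ∀ x y, (x, y) ∈ C → ∀ ξ ∈ Ξ, |ψ0ν ξ x y - ψ0 ξ x y| ≤ σν)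
    -- (d) translation closure and zero mappings
    (hshiftF : ∀ F ∈ ℱ, ∀ a : EuclideanSpace ℝ (Fin n), (fun ζ => F ζ + a) ∈ ℱ)
    (hshiftG : ∀ G ∈ 𝒢, ∀ b : EuclideanSpace ℝ (Fin m), (fun ζ => G ζ + b) ∈ 𝒢)
    (hzeroF : (fun _ => (0 : EuclideanSpace ℝ (Fin n))) ∈ ℱ)
    (hzeroG : (fun _ => (0 : EuclideanSpace ℝ (Fin m))) ∈ 𝒢)
    -- (F^ν,G^ν) is a τ^ν-minimizer of (TP)^ν without risk constraints
    (τν : ℝ) (hτν : 0 ≤ τν)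
    (Fν : EuclideanSpace ℝ (Fin r) → EuclideanSpace ℝ (Fin n))
    (Gν : EuclideanSpace ℝ (Fin r) → EuclideanSpace ℝ (Fin m))
    (hFνmem : Fν ∈ ℱ) (hGνmem : Gν ∈ 𝒢)
    (hνC : ∀ ω, (Fν (ξν ω), Heav (Gν (ξν ω))) ∈ C)
    (hνD : ∀ ω, Gν (ξν ω) ∈ Dset m ε δν)
    (hnearmin : ∀ F ∈ ℱ, ∀ G ∈ 𝒢,
      (∀ ω, (F (ξν ω), Heav (G (ξν ω))) ∈ C) →
      (∀ ω, G (ξν ω) ∈ Dset m ε δν) →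
      R0 (fun ω => ψ0ν (ξν ω) (Fν (ξν ω)) (Heav (Gν (ξν ω)))) + hν Fν Gν ≤
        R0 (fun ω => ψ0ν (ξν ω) (F (ξν ω)) (Heav (G (ξν ω)))) + hν F G + τν)
    -- ω^ν attains the minimum over training points
    (ωgreedy : Ω)
    (hωgreedy : ∀ ω, ψ0ν (ξν ωgreedy) (Fν (ξν ωgreedy)) (Heav (Gν (ξν ωgreedy))) ≤
      ψ0ν (ξν ω) (Fν (ξν ω)) (Heav (Gν (ξν ω)))) :
    ∀ ξ ∈ Ξ,
      (Fν (ξν ωgreedy), Heav (Gν (ξν ωgreedy))) ∈ C ∧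
      BddBelow {v : ℝ | ∃ x y, (x, y) ∈ C ∧ v = ψ0 ξ x y} ∧
      ψ0 ξ (Fν (ξν ωgreedy)) (Heav (Gν (ξν ωgreedy))) ≤
        sInf {v : ℝ | ∃ x y, (x, y) ∈ C ∧ v = ψ0 ξ x y} +
          (2 * σν + τν + 2 * κ0 * Metric.diam Ξ) := by
  intro ξ hξ
  set x' := Fν (ξν ωgreedy) with hx'
  set y' := Heav (Gν (ξν ωgreedy)) with hy'
  have hC' : (x', y') ∈ C := hνC ωgreedy
  have hD : ∀ ζ ∈ Ξ, ∀ ζ' ∈ Ξ, dist ζ ζ' ≤ Metric.diam Ξ := fun ζ h ζ' h' =>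
    Metric.dist_le_diam_of_mem hΞcomp.isBounded h h'
  -- key estimate against every (x,y) ∈ C
  have key : ∀ x y, (x, y) ∈ C →
      ψ0 ξ x' y' ≤ ψ0 ξ x y + (2 * σν + τν + 2 * κ0 * Metric.diam Ξ) := by
    intro x y hxy
    classical
    set b : EuclideanSpace ℝ (Fin m) := WithLp.toLp 2 (fun i => if y i = 0 then -ε else ε) with hb
    have hHb : Heav b = y := by
      ext i
      rcases hCbin (x, y) hxy i with h0 | h1
      · have h0' : y i = 0 := h0
        simp [Heav, hb, h0', neg_nonpos.mpr hε.le]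
      · have h1' : y i = 1 := h1
        simp [Heav, hb, h1', hε.not_ge]
    have hFmem : (fun _ : EuclideanSpace ℝ (Fin r) => x) ∈ ℱ := by
      have := hshiftF _ hzeroF x
      simpa using this
    have hGmem : (fun _ : EuclideanSpace ℝ (Fin r) => b) ∈ 𝒢 := by
      have := hshiftG _ hzeroG b
      simpa using this
    have feasC : ∀ ω, ((fun _ : EuclideanSpace ℝ (Fin r) => x) (ξν ω),
        Heav ((fun _ : EuclideanSpace ℝ (Fin r) => b) (ξν ω))) ∈ C := by
      intro ω; simpa [hHb] using hxy
    have feasD : ∀ ω, (fun _ : EuclideanSpace ℝ (Fin r) => b) (ξν ω) ∈ Dset m ε δν := by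
      intro ω i
      have habs : |b i| = ε := by
        by_cases h : y i = 0 <;> simp [hb, h, abs_of_pos hε]
      exact ⟨le_of_eq habs.symm, by rw [habs]; exact le_of_lt hδν⟩
    have hνconst : hν (fun _ => x) (fun _ => b) = 0 :=
      hhν_const _ _ (fun _ _ _ _ => rfl) (fun _ _ _ _ => rfl)
    set c0 : ℝ := ψ0ν (ξν ωgreedy) x' y' with hc0
    have step1 : c0 ≤ R0 (fun ω => ψ0ν (ξν ω) (Fν (ξν ω)) (Heav (Gν (ξν ω)))) := by
      calc c0 = R0 (fun _ => c0) := (hR0const c0).symm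
        _ ≤ _ := hR0mono _ _ hωgreedy
    have hnear := hnearmin _ hFmem _ hGmem feasC feasD
    simp only [hHb, hνconst, add_zero] at hnear
    have step3 : R0 (fun ω => ψ0ν (ξν ω) x y) ≤ ψ0 ξ x y + σν + κ0 * Metric.diam Ξ := by
      have hbnd : ∀ ω, ψ0ν (ξν ω) x y ≤ ψ0 ξ x y + σν + κ0 * Metric.diam Ξ := by
        intro ω
        have h1 := (abs_le.mp (happrox x y hxy (ξν ω) (hξν ω))).2
        have h2 := (abs_le.mp (hLip x y hxy (ξν ω) (hξν ω) ξ hξ)).2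
        have h3 : κ0 * dist (ξν ω) ξ ≤ κ0 * Metric.diam Ξ :=
          mul_le_mul_of_nonneg_left (hD _ (hξν ω) _ hξ) hκ0
        linarith
      calc R0 (fun ω => ψ0ν (ξν ω) x y)
          ≤ R0 (fun _ => ψ0 ξ x y + σν + κ0 * Metric.diam Ξ) := hR0mono _ _ hbnd
        _ = ψ0 ξ x y + σν + κ0 * Metric.diam Ξ := hR0const _
    have step4 : ψ0 ξ x' y' ≤ c0 + σν + κ0 * Metric.diam Ξ := by
      have h1 := (abs_le.mp (hLip x' y' hC' ξ hξ (ξν ωgreedy) (hξν ωgreedy))).2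
      have h2 := (abs_le.mp (happrox x' y' hC' (ξν ωgreedy) (hξν ωgreedy))).1
      have h3 : κ0 * dist ξ (ξν ωgreedy) ≤ κ0 * Metric.diam Ξ :=
        mul_le_mul_of_nonneg_left (hD _ hξ _ (hξν ωgreedy)) hκ0
      linarith
    have hnn := hhν_nonneg Fν Gν
    linarith
  refine ⟨hC', ⟨ψ0 ξ x' y' - (2 * σν + τν + 2 * κ0 * Metric.diam Ξ), ?_⟩, ?_⟩
  · rintro v ⟨x, y, hxy, rfl⟩
    linarith [key x y hxy]
  · have hle : ψ0 ξ x' y' - (2 * σν + τν + 2 * κ0 * Metric.diam Ξ) ≤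
        sInf {v : ℝ | ∃ x y, (x, y) ∈ C ∧ v = ψ0 ξ x y} := by
      refine le_csInf ⟨ψ0 ξ x' y', x', y', hC', rfl⟩ ?_
      rintro v ⟨x, y, hxy, rfl⟩
      linarith [key x y hxy]
    linarith
end

section
/- Decision rule guarantee for the adaptive minimum decision rule (AMDR). Fix ν ∈ ℕ, suppose δ, δ^ν ∈ (ε,∞], τ^ν ∈ [0,∞), (F^ν,G^ν) is a τ^ν-minimizer of the training problem (TP)^ν without the risk constraints, and the following hold: (a) ℛ₀ is real-valued, monotone, and convex; (b) h^ν(F,G) = 0 whenever F and G are constant mappings; (c) there exist σ^ν, κ₀ ∈ [0,∞) with |ψ₀(ξ,x,y) − ψ₀(ξ',x,y)| ≤ κ₀‖ξ − ξ'‖₂ and |ψ₀^ν(ξ,x,y) − ψ₀(ξ,x,y)| ≤ σ^ν for all ξ,ξ' ∈ Ξ and (x,y) ∈ C; (d) ℱ and 𝒢 are closed under addition of constants and contain their zero mappings. For each ξ ∈ Ξ let ω̄(ξ) ∈ argmin_{ω∈Ω} ψ₀(ξ, F^ν(ξ^ν(ω)), ℍ(G^ν(ξ^ν(ω)))) and set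 F̄(ξ) = F^ν(ξ^ν(ω̄(ξ))) and Ḡ(ξ) = G^ν(ξ^ν(ω̄(ξ))). Then for every ξ ∈ Ξ: (F̄(ξ), ℍ(Ḡ(ξ))) ∈ C, the infimum inf_{(x,y)∈C} ψ₀(ξ,x,y) is finite, and ψ₀(ξ, F̄(ξ), ℍ(Ḡ(ξ))) ≤ inf_{(x,y)∈C} ψ₀(ξ,x,y) + 2σ^ν + τ^ν + 2κ₀·diam Ξ. -/
open Filter Finset

/-- Decision rule guarantee for the adaptive minimum decision rule (AMDR): the
`ξ`-adaptive decision prescribed at the best training point for `ξ` is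
`(2σ^ν + τ^ν + 2κ₀·diam Ξ)`-suboptimal for the actual problem uniformly over `ξ ∈ Ξ`. -/
theorem AMDR_guarantee
    {r n m : ℕ} {Ω : Type} [Fintype Ω] [Nonempty Ω]
    (P : Ω → ℝ) (hP : ∀ ω, 0 < P ω) (hPsum : ∑ ω, P ω = 1)
    (ψ0 ψ0ν : EuclideanSpace ℝ (Fin r) → EuclideanSpace ℝ (Fin n) →
      EuclideanSpace ℝ (Fin m) → ℝ)
    (hψ0cont : Continuous fun p : EuclideanSpace ℝ (Fin r) × EuclideanSpace ℝ (Fin n) ×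
      EuclideanSpace ℝ (Fin m) => ψ0 p.1 p.2.1 p.2.2)
    (hψ0νcont : Continuous fun p : EuclideanSpace ℝ (Fin r) × EuclideanSpace ℝ (Fin n) ×
      EuclideanSpace ℝ (Fin m) => ψ0ν p.1 p.2.1 p.2.2)
    (C : Set (EuclideanSpace ℝ (Fin n) × EuclideanSpace ℝ (Fin m)))
    (hCne : C.Nonempty) (hCcl : IsClosed C)
    (hCbin : ∀ p ∈ C, ∀ i, p.2 i = 0 ∨ p.2 i = 1)
    (Ξ : Set (EuclideanSpace ℝ (Fin r))) (hΞcomp : IsCompact Ξ)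
    (ξν : Ω → EuclideanSpace ℝ (Fin r)) (hξν : ∀ ω, ξν ω ∈ Ξ)
    (ℱ : Set (EuclideanSpace ℝ (Fin r) → EuclideanSpace ℝ (Fin n)))
    (𝒢 : Set (EuclideanSpace ℝ (Fin r) → EuclideanSpace ℝ (Fin m)))
    (hℱcont : ∀ F ∈ ℱ, ContinuousOn F Ξ) (h𝒢cont : ∀ G ∈ 𝒢, ContinuousOn G Ξ)
    -- (a) ℛ₀ real-valued, monotone, convex
    (R0 : (Ω → ℝ) → ℝ)
    (hR0const : ∀ c : ℝ, R0 (fun _ => c) = c)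
    (hR0mono : ∀ η η' : Ω → ℝ, (∀ ω, η ω ≤ η' ω) → R0 η ≤ R0 η')
    (hR0convex : ∀ l : ℝ, 0 ≤ l → l ≤ 1 → ∀ η η' : Ω → ℝ,
      R0 (fun ω => (1 - l) * η ω + l * η' ω) ≤ (1 - l) * R0 η + l * R0 η')
    -- (b) regularizer vanishes on constant mappings
    (hν : (EuclideanSpace ℝ (Fin r) → EuclideanSpace ℝ (Fin n)) →
      (EuclideanSpace ℝ (Fin r) → EuclideanSpace ℝ (Fin m)) → ℝ)
    (hhν_nonneg : ∀ F G, 0 ≤ hν F G)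
    (hhν_const : ∀ F G, (∀ ζ ∈ Ξ, ∀ ζ' ∈ Ξ, F ζ = F ζ') →
      (∀ ζ ∈ Ξ, ∀ ζ' ∈ Ξ, G ζ = G ζ') → hν F G = 0)
    (ε : ℝ) (hε : 0 < ε)
    (δ δν : EReal) (hδ : (ε : EReal) < δ) (hδν : (ε : EReal) < δν)
    -- (c) Lipschitz and approximation bounds
    (σν κ0 : ℝ) (hσν : 0 ≤ σν) (hκ0 : 0 ≤ κ0)
    (hLip : ∀ x y, (x, y) ∈ C → ∀ ξ ∈ Ξ, ∀ ξ' ∈ Ξ,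
      |ψ0 ξ x y - ψ0 ξ' x y| ≤ κ0 * dist ξ ξ')
    (happrox : ∀ x y, (x, y) ∈ C → ∀ ξ ∈ Ξ, |ψ0ν ξ x y - ψ0 ξ x y| ≤ σν)
    -- (d) translation closure and zero mappings
    (hshiftF : ∀ F ∈ ℱ, ∀ a : EuclideanSpace ℝ (Fin n), (fun ζ => F ζ + a) ∈ ℱ)
    (hshiftG : ∀ G ∈ 𝒢, ∀ b : EuclideanSpace ℝ (Fin m), (fun ζ => G ζ + b) ∈ 𝒢)
    (hzeroF : (fun _ => (0 : EuclideanSpace ℝ (Fin n))) ∈ ℱ)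
    (hzeroG : (fun _ => (0 : EuclideanSpace ℝ (Fin m))) ∈ 𝒢)
    -- (F^ν,G^ν) is a τ^ν-minimizer of (TP)^ν without risk constraints
    (τν : ℝ) (hτν : 0 ≤ τν)
    (Fν : EuclideanSpace ℝ (Fin r) → EuclideanSpace ℝ (Fin n))
    (Gν : EuclideanSpace ℝ (Fin r) → EuclideanSpace ℝ (Fin m))
    (hFνmem : Fν ∈ ℱ) (hGνmem : Gν ∈ 𝒢)
    (hνC : ∀ ω, (Fν (ξν ω), Heav (Gν (ξν ω))) ∈ C)
    (hνD : ∀ ω, Gν (ξν ω) ∈ Dset m ε δν)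
    (hnearmin : ∀ F ∈ ℱ, ∀ G ∈ 𝒢,
      (∀ ω, (F (ξν ω), Heav (G (ξν ω))) ∈ C) →
      (∀ ω, G (ξν ω) ∈ Dset m ε δν) →
      R0 (fun ω => ψ0ν (ξν ω) (Fν (ξν ω)) (Heav (Gν (ξν ω)))) + hν Fν Gν ≤
        R0 (fun ω => ψ0ν (ξν ω) (F (ξν ω)) (Heav (G (ξν ω)))) + hν F G + τν)
    -- ω̄(ξ) attains, for each ξ, the minimum of ψ₀(ξ,·,·) over the training prescriptions
    (ωbar : EuclideanSpace ℝ (Fin r) → Ω)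
    (hωbar : ∀ ξ ∈ Ξ, ∀ ω,
      ψ0 ξ (Fν (ξν (ωbar ξ))) (Heav (Gν (ξν (ωbar ξ)))) ≤
        ψ0 ξ (Fν (ξν ω)) (Heav (Gν (ξν ω)))) :
    ∀ ξ ∈ Ξ,
      (Fν (ξν (ωbar ξ)), Heav (Gν (ξν (ωbar ξ)))) ∈ C ∧
      BddBelow {v : ℝ | ∃ x y, (x, y) ∈ C ∧ v = ψ0 ξ x y} ∧
      ψ0 ξ (Fν (ξν (ωbar ξ))) (Heav (Gν (ξν (ωbar ξ)))) ≤
        sInf {v : ℝ | ∃ x y, (x, y) ∈ C ∧ v = ψ0 ξ x y} +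
          (2 * σν + τν + 2 * κ0 * Metric.diam Ξ) := by
  intro ξ hξ
  set A := ψ0 ξ (Fν (ξν (ωbar ξ))) (Heav (Gν (ξν (ωbar ξ)))) with hA
  have hdiam : ∀ ω : Ω, dist ξ (ξν ω) ≤ Metric.diam Ξ := fun ω =>
    Metric.dist_le_diam_of_mem hΞcomp.isBounded hξ (hξν ω)
  -- key: bound against any (x,y) ∈ C
  have key : ∀ x y, (x, y) ∈ C →
      A ≤ ψ0 ξ x y + (2 * σν + τν + 2 * κ0 * Metric.diam Ξ) := by
    intro x y hxy
    -- constant candidate mappings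
    set g : EuclideanSpace ℝ (Fin m) := WithLp.toLp 2 (fun i => if y i = 0 then -ε else ε) with hg
    have hxF : (fun _ : EuclideanSpace ℝ (Fin r) => x) ∈ ℱ := by
      simpa using hshiftF _ hzeroF x
    have hgG : (fun _ : EuclideanSpace ℝ (Fin r) => g) ∈ 𝒢 := by
      simpa using hshiftG _ hzeroG g
    have hHg : Heav g = y := by
      ext i
      rcases hCbin (x, y) hxy i with h0 | h1
      · have h0' : y i = 0 := h0
        simp [Heav, hg, h0', hε.le]
      · have h1' : y i = 1 := h1
        simp [Heav, hg, h1', not_le.mpr hε, one_ne_zero]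
    have hgD : g ∈ Dset m ε δν := by
      intro i
      have habs : |g i| = ε := by
        rcases hCbin (x, y) hxy i with h0 | h1
        · have h0' : y i = 0 := h0
          simp [hg, h0', abs_of_nonneg hε.le]
        · have h1' : y i = 1 := h1
          simp [hg, h1', abs_of_nonneg hε.le, one_ne_zero]
      exact ⟨by rw [habs], by rw [habs]; exact hδν.le⟩
    have hmin := hnearmin _ hxF _ hgG (fun ω => by simpa [hHg] using hxy)
      (fun ω => hgD)
    have hνconst : hν (fun _ => x) (fun _ => g) = 0 :=
      hhν_const _ _ (fun _ _ _ _ => rfl) (fun _ _ _ _ => rfl)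
    -- lower bound on R0 of training objective
    have h1 : ∀ ω, A - (σν + κ0 * Metric.diam Ξ) ≤
        ψ0ν (ξν ω) (Fν (ξν ω)) (Heav (Gν (ξν ω))) := by
      intro ω
      have hC := hνC ω
      have ha := happrox _ _ hC (ξν ω) (hξν ω)
      have hl := hLip _ _ hC ξ hξ (ξν ω) (hξν ω)
      have hl2 : κ0 * dist ξ (ξν ω) ≤ κ0 * Metric.diam Ξ :=
        mul_le_mul_of_nonneg_left (hdiam ω) hκ0
      have hm := hωbar ξ hξ ω
      have h1 := abs_le.mp ha
      have h2 := abs_le.mp hl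
      rw [hA]
      linarith [h1.1, h2.2]
    have hlow : A - (σν + κ0 * Metric.diam Ξ) ≤
        R0 (fun ω => ψ0ν (ξν ω) (Fν (ξν ω)) (Heav (Gν (ξν ω)))) := by
      calc A - (σν + κ0 * Metric.diam Ξ)
          = R0 (fun _ => A - (σν + κ0 * Metric.diam Ξ)) := (hR0const _).symm
        _ ≤ _ := hR0mono _ _ h1
    -- upper bound on R0 of candidate objective
    have h2 : ∀ ω, ψ0ν (ξν ω) x y ≤ ψ0 ξ x y + (σν + κ0 * Metric.diam Ξ) := by
      intro ω
      have ha := happrox _ _ hxy (ξν ω) (hξν ω)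
      have hl := hLip _ _ hxy ξ hξ (ξν ω) (hξν ω)
      have hl2 : κ0 * dist ξ (ξν ω) ≤ κ0 * Metric.diam Ξ :=
        mul_le_mul_of_nonneg_left (hdiam ω) hκ0
      have h1 := abs_le.mp ha
      have h2 := abs_le.mp hl
      linarith [h1.2, h2.1]
    have hup : R0 (fun ω => ψ0ν (ξν ω) x y) ≤
        ψ0 ξ x y + (σν + κ0 * Metric.diam Ξ) := by
      calc R0 (fun ω => ψ0ν (ξν ω) x y)
          ≤ R0 (fun _ => ψ0 ξ x y + (σν + κ0 * Metric.diam Ξ)) := hR0mono _ _ h2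
        _ = _ := hR0const _
    have hνnn := hhν_nonneg Fν Gν
    simp only [hHg, hνconst] at hmin
    linarith
  have hbdd : BddBelow {v : ℝ | ∃ x y, (x, y) ∈ C ∧ v = ψ0 ξ x y} := by
    refine ⟨A - (2 * σν + τν + 2 * κ0 * Metric.diam Ξ), ?_⟩
    rintro v ⟨x, y, hxy, rfl⟩
    linarith [key x y hxy]
  refine ⟨hνC (ωbar ξ), hbdd, ?_⟩
  have hne : {v : ℝ | ∃ x y, (x, y) ∈ C ∧ v = ψ0 ξ x y}.Nonempty := by
    obtain ⟨⟨x0, y0⟩, h0⟩ := hCne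
    exact ⟨ψ0 ξ x0 y0, x0, y0, h0, rfl⟩
  have : A - (2 * σν + τν + 2 * κ0 * Metric.diam Ξ) ≤
      sInf {v : ℝ | ∃ x y, (x, y) ∈ C ∧ v = ψ0 ξ x y} := by
    apply le_csInf hne
    rintro v ⟨x, y, hxy, rfl⟩
    linarith [key x y hxy]
  linarith
end
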